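/- Define g(y) := f(y) + f(2u₀ − y) + f(2l₀ − y) for y ∈ ℝ (the reflected extension of f). If moreover the (left) derivative of f at u₀ vanishes, f'(u₀) = 0, then for every h with 0 < h < (u₀ − l₀)/2: |∫_ℝ K(z) g(u₀ − h z) dz − f(u₀)| ≤ L' · h² · ∫_{[0,1]} z² K(z) dz. (Hence when f'(u₀−) = 0 the boundary bias of the reflection density estimator at u₀ becomes of order h².) -/

import Mathlib

open MeasureTheory Filter Topology

/-- Second-order Taylor bound at the right endpoint when the derivative
vanishes there. -/
lemma taylor_right_endpoint (f f' : ℝ → ℝ) (l₀ u₀ L' : ℝ) (hlu : l₀ ≤ u₀)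
    (hfderiv : ∀ y ∈ Set.Icc l₀ u₀, HasDerivWithinAt f (f' y) (Set.Icc l₀ u₀) y)
    (hL' : 0 ≤ L')
    (hLip : ∀ a ∈ Set.Icc l₀ u₀, ∀ b ∈ Set.Icc l₀ u₀, |f' a - f' b| ≤ L' * |a - b|)
    (hderiv_end : f' u₀ = 0) :
    ∀ x ∈ Set.Icc l₀ u₀, |f u₀ - f x| ≤ L' / 2 * (u₀ - x) ^ 2 := by
  intro x hx
  have hu : u₀ ∈ Set.Icc l₀ u₀ := ⟨hlu, le_rfl⟩
  have hxu : x ≤ u₀ := hx.2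
  have hsub : Set.Icc x u₀ ⊆ Set.Icc l₀ u₀ := Set.Icc_subset_Icc hx.1 le_rfl
  have hcf : ContinuousOn f (Set.Icc l₀ u₀) := fun y hy =>
    (hfderiv y hy).continuousWithinAt
  have hcf' : ContinuousOn f' (Set.Icc l₀ u₀) := by
    have hl : LipschitzOnWith (Real.toNNReal L') f' (Set.Icc l₀ u₀) := by
      apply LipschitzOnWith.of_dist_le_mul
      intro a ha b hb
      rw [Real.dist_eq, Real.dist_eq, Real.coe_toNNReal L' hL']
      exact hLip a ha b hb
    exact hl.continuousOn
  have hint : IntervalIntegrable f' volume x u₀ :=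
    (hcf'.mono hsub).intervalIntegrable_of_Icc hxu
  have hFTC : (∫ t in x..u₀, f' t) = f u₀ - f x := by
    apply intervalIntegral.integral_eq_sub_of_hasDeriv_right_of_le hxu
      (hcf.mono hsub) ?_ hint
    intro t ht
    have ht' : t ∈ Set.Ioo l₀ u₀ := ⟨lt_of_le_of_lt hx.1 ht.1, ht.2⟩
    exact ((hfderiv t (Set.Ioo_subset_Icc_self ht')).hasDerivAt
      (Icc_mem_nhds ht'.1 ht'.2)).hasDerivWithinAt
  rw [← hFTC]
  have hbd : ∀ t ∈ Set.Ioc x u₀, |f' t| ≤ L' * (u₀ - t) := by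
    intro t ht
    have h1 := hLip t (hsub ⟨ht.1.le, ht.2⟩) u₀ hu
    rw [hderiv_end, sub_zero] at h1
    have h2 : |t - u₀| = u₀ - t := by
      rw [abs_of_nonpos (by linarith [ht.2]), neg_sub]
    rw [h2] at h1
    exact h1
  have hgint : IntervalIntegrable (fun t => L' * (u₀ - t)) volume x u₀ :=
    (Continuous.continuousOn (by continuity)).intervalIntegrable_of_Icc hxu
  have h1 : |∫ t in x..u₀, f' t| ≤ |∫ t in x..u₀, L' * (u₀ - t)| := by
    rw [← Real.norm_eq_abs]
    apply intervalIntegral.norm_integral_le_abs_of_norm_le ?_ hgint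
    rw [Set.uIoc_of_le hxu]
    refine (ae_restrict_iff' measurableSet_Ioc).mpr (Eventually.of_forall ?_)
    intro t ht
    rw [Real.norm_eq_abs]
    exact hbd t ht
  have h2 : (∫ t in x..u₀, L' * (u₀ - t)) = L' / 2 * (u₀ - x) ^ 2 := by
    rw [intervalIntegral.integral_const_mul,
      intervalIntegral.integral_sub intervalIntegrable_const
        intervalIntegral.intervalIntegrable_id, intervalIntegral.integral_const,
      integral_id, smul_eq_mul]
    ring
  rw [h2] at h1
  calc |∫ t in x..u₀, f' t| ≤ |L' / 2 * (u₀ - x) ^ 2| := h1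
    _ = L' / 2 * (u₀ - x) ^ 2 := abs_of_nonneg (by positivity)

/-- When the (one-sided) derivative of the density vanishes at the right
endpoint, `f'(u₀) = 0`, the boundary bias of the reflection density estimator
at `u₀` is of order `h²`: for `0 < h < (u₀ − l₀)/2`,
`|∫ K(z) g(u₀ − h z) dz − f(u₀)| ≤ L' h² ∫_{[0,1]} z² K(z) dz`, where
`g(y) = f(y) + f(2u₀ − y) + f(2l₀ − y)` is the reflected extension of `f`. -/
theorem reflection_density_bias_order_two
    (K f f' : ℝ → ℝ) (l₀ u₀ L' : ℝ) (hlu : l₀ < u₀)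
    (hK0 : ∀ z, 0 ≤ K z) (hKint : Integrable K)
    (hK1 : (∫ z, K z) = 1) (hKsymm : ∀ z, K (-z) = K z)
    (hKsupp : ∀ z : ℝ, 1 < |z| → K z = 0)
    (hfzero : ∀ y, y ∉ Set.Icc l₀ u₀ → f y = 0)
    (hfderiv : ∀ y ∈ Set.Icc l₀ u₀, HasDerivWithinAt f (f' y) (Set.Icc l₀ u₀) y)
    (hL' : 0 ≤ L')
    (hLip : ∀ a ∈ Set.Icc l₀ u₀, ∀ b ∈ Set.Icc l₀ u₀, |f' a - f' b| ≤ L' * |a - b|)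
    (hderiv_end : f' u₀ = 0) :
    ∀ h : ℝ, 0 < h → h < (u₀ - l₀) / 2 →
      |(∫ z, K z * ((fun y => f y + f (2 * u₀ - y) + f (2 * l₀ - y)) (u₀ - h * z)))
          - f u₀| ≤ L' * h ^ 2 * ∫ z in Set.Icc (0:ℝ) 1, z ^ 2 * K z := by
  intro h hh0 hh2
  classical
  -- measurability of f
  have hcf : ContinuousOn f (Set.Icc l₀ u₀) := fun y hy =>
    (hfderiv y hy).continuousWithinAt
  have hfm : Measurable f := by
    have hfeq : f = Set.piecewise (Set.Icc l₀ u₀) f (fun _ => 0) := by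
      funext y
      by_cases hy : y ∈ Set.Icc l₀ u₀
      · simp [Set.piecewise, hy]
      · simp [Set.piecewise, hy, hfzero y hy]
    rw [hfeq]
    exact ContinuousOn.measurable_piecewise hcf continuousOn_const measurableSet_Icc
  -- global bound on f
  obtain ⟨C, hC⟩ := (isCompact_Icc :
      IsCompact (Set.Icc l₀ u₀)).exists_bound_of_continuousOn hcf
  set M : ℝ := max C 0 with hM
  have hMf : ∀ y, |f y| ≤ M := by
    intro y
    by_cases hy : y ∈ Set.Icc l₀ u₀
    · exact le_trans (by simpa [Real.norm_eq_abs] using hC y hy) (le_max_left _ _)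
    · simp [hfzero y hy, le_max_right C 0]
      exact le_max_right C 0
  -- integrability helper
  have key_int : ∀ c d : ℝ, Integrable (fun z => K z * f (c + d * z)) := by
    intro c d
    refine Integrable.mono' (hKint.const_mul M) ?_ (Eventually.of_forall ?_)
    · exact hKint.aestronglyMeasurable.mul
        ((hfm.comp (measurable_const.add (measurable_const.mul measurable_id))).aestronglyMeasurable)
    · intro z
      rw [Real.norm_eq_abs, abs_mul, abs_of_nonneg (hK0 z)]
      exact le_trans (mul_le_mul_of_nonneg_left (hMf _) (hK0 z)) (le_of_eq (mul_comm _ _))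
  have int1 : Integrable (fun z => K z * f (u₀ - h * z)) := by
    have := key_int u₀ (-h)
    simpa [sub_eq_add_neg, neg_mul] using this
  have int2 : Integrable (fun z => K z * f (u₀ + h * z)) := key_int u₀ h
  -- pointwise rewriting of the integrand
  have hA : ∀ z : ℝ, K z * ((fun y => f y + f (2 * u₀ - y) + f (2 * l₀ - y)) (u₀ - h * z))
      = K z * f (u₀ - h * z) + K z * f (u₀ + h * z) := by
    intro z
    by_cases hz : |z| ≤ 1
    · have hz1 : z ≤ 1 := (abs_le.mp hz).2
      have h3 : f (2 * l₀ - (u₀ - h * z)) = 0 := by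
        apply hfzero
        intro hmem
        have := hmem.1
        nlinarith [hmem.1]
      simp only
      rw [show (2 : ℝ) * u₀ - (u₀ - h * z) = u₀ + h * z by ring, h3]
      ring
    · push_neg at hz
      simp [hKsupp z hz]
  -- Taylor bound
  have taylor := taylor_right_endpoint f f' l₀ u₀ L' hlu.le hfderiv hL' hLip hderiv_end
  -- rewrite the difference as one integral
  have e1 : (∫ z, K z * ((fun y => f y + f (2 * u₀ - y) + f (2 * l₀ - y)) (u₀ - h * z)))
      = ∫ z, (K z * f (u₀ - h * z) + K z * f (u₀ + h * z)) := by
    exact integral_congr_ae (Eventually.of_forall hA)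
  have e2 : f u₀ = ∫ z, K z * f u₀ := by
    rw [integral_mul_const, hK1, one_mul]
  have hrw : (∫ z, K z * ((fun y => f y + f (2 * u₀ - y) + f (2 * l₀ - y)) (u₀ - h * z)))
      - f u₀ = ∫ z, (K z * f (u₀ - h * z) + K z * f (u₀ + h * z) - K z * f u₀) := by
    have intsum : Integrable (fun z => K z * f (u₀ - h * z) + K z * f (u₀ + h * z)) :=
      int1.add int2
    rw [e1]
    nth_rewrite 1 [e2]
    rw [← integral_sub intsum (hKint.mul_const (f u₀))]
  rw [hrw]
  -- the integrable bound function
  have hqint : Integrable (fun z : ℝ => z ^ 2 * K z) := by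
    refine Integrable.mono' hKint ?_ (Eventually.of_forall ?_)
    · exact ((measurable_id.pow_const 2).aestronglyMeasurable.mul hKint.aestronglyMeasurable)
    · intro z
      rw [Real.norm_eq_abs, abs_of_nonneg (mul_nonneg (sq_nonneg z) (hK0 z))]
      by_cases hz : |z| ≤ 1
      · have hz2 : z ^ 2 ≤ 1 := by nlinarith [(abs_le.mp hz).1, (abs_le.mp hz).2]
        calc z ^ 2 * K z ≤ 1 * K z := mul_le_mul_of_nonneg_right hz2 (hK0 z)
          _ = K z := one_mul _
      · push_neg at hz
        simp [hKsupp z hz]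
  -- the pointwise a.e. bound
  have hae : ∀ᵐ z : ℝ, ‖K z * f (u₀ - h * z) + K z * f (u₀ + h * z) - K z * f u₀‖
      ≤ L' / 2 * h ^ 2 * (z ^ 2 * K z) := by
    filter_upwards [compl_mem_ae_iff.mpr (measure_singleton (0:ℝ))] with z hz0
    have hz0' : z ≠ 0 := by simpa using hz0
    by_cases hz : |z| ≤ 1
    · have hz1 := (abs_le.mp hz).1
      have hz2 := (abs_le.mp hz).2
      rcases lt_or_gt_of_ne hz0' with hzneg | hzpos
      · -- z < 0 : f (u₀ - h z) = 0, D = f (u₀ + h z) - f u₀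
        have hv1 : f (u₀ - h * z) = 0 := by
          apply hfzero
          intro hmem
          nlinarith [hmem.2]
        have hx : u₀ + h * z ∈ Set.Icc l₀ u₀ := by
          constructor <;> nlinarith
        have hD := taylor (u₀ + h * z) hx
        rw [show u₀ - (u₀ + h * z) = -(h * z) by ring] at hD
        rw [hv1, mul_zero, zero_add, ← mul_sub, Real.norm_eq_abs, abs_mul,
          abs_of_nonneg (hK0 z)]
        have hD' : |f (u₀ + h * z) - f u₀| ≤ L' / 2 * h ^ 2 * z ^ 2 := by
          rw [abs_sub_comm]
          calc |f u₀ - f (u₀ + h * z)| ≤ L' / 2 * (-(h * z)) ^ 2 := hD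
            _ = L' / 2 * h ^ 2 * z ^ 2 := by ring
        calc K z * |f (u₀ + h * z) - f u₀| ≤ K z * (L' / 2 * h ^ 2 * z ^ 2) :=
              mul_le_mul_of_nonneg_left hD' (hK0 z)
          _ = L' / 2 * h ^ 2 * (z ^ 2 * K z) := by ring
      · -- z > 0 : f (u₀ + h z) = 0, D = f (u₀ - h z) - f u₀
        have hv2 : f (u₀ + h * z) = 0 := by
          apply hfzero
          intro hmem
          nlinarith [hmem.2]
        have hx : u₀ - h * z ∈ Set.Icc l₀ u₀ := by
          constructor <;> nlinarith
        have hD := taylor (u₀ - h * z) hx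
        rw [show u₀ - (u₀ - h * z) = h * z by ring] at hD
        rw [hv2, mul_zero, add_zero, ← mul_sub, Real.norm_eq_abs, abs_mul,
          abs_of_nonneg (hK0 z)]
        have hD' : |f (u₀ - h * z) - f u₀| ≤ L' / 2 * h ^ 2 * z ^ 2 := by
          rw [abs_sub_comm]
          calc |f u₀ - f (u₀ - h * z)| ≤ L' / 2 * (h * z) ^ 2 := hD
            _ = L' / 2 * h ^ 2 * z ^ 2 := by ring
        calc K z * |f (u₀ - h * z) - f u₀| ≤ K z * (L' / 2 * h ^ 2 * z ^ 2) :=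
              mul_le_mul_of_nonneg_left hD' (hK0 z)
          _ = L' / 2 * h ^ 2 * (z ^ 2 * K z) := by ring
    · push_neg at hz
      simp [hKsupp z hz]
  have hbound : |∫ z, (K z * f (u₀ - h * z) + K z * f (u₀ + h * z) - K z * f u₀)|
      ≤ ∫ z, L' / 2 * h ^ 2 * (z ^ 2 * K z) := by
    rw [← Real.norm_eq_abs]
    exact norm_integral_le_of_norm_le (hqint.const_mul _) hae
  -- evaluate the bound integral: ∫ℝ z² K z = 2 ∫_{[0,1]} z² K z
  have hsymm_split : (∫ z : ℝ, z ^ 2 * K z) = 2 * ∫ z in Set.Icc (0:ℝ) 1, z ^ 2 * K z := by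
    have hIic : (∫ z in Set.Iic (0:ℝ), z ^ 2 * K z) = ∫ z in Set.Ioi (0:ℝ), z ^ 2 * K z := by
      have h0 := integral_comp_neg_Ioi (0:ℝ) (fun w => w ^ 2 * K w)
      simp only [neg_zero] at h0
      rw [← h0]
      simp only [neg_sq, hKsymm]
    have hIoi : (∫ z in Set.Ioi (0:ℝ), z ^ 2 * K z)
        = ∫ z in Set.Ioc (0:ℝ) 1, z ^ 2 * K z := by
      rw [← Set.Ioc_union_Ioi_eq_Ioi (zero_le_one (α := ℝ)),
        setIntegral_union (Set.Ioc_disjoint_Ioi le_rfl) measurableSet_Ioi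
          hqint.integrableOn hqint.integrableOn]
      have : (∫ z in Set.Ioi (1:ℝ), z ^ 2 * K z) = 0 := by
        apply setIntegral_eq_zero_of_forall_eq_zero
        intro z hz
        have : (1:ℝ) < |z| := lt_of_lt_of_le hz (le_abs_self z)
        simp [hKsupp z this]
      rw [this, add_zero]
    rw [← intervalIntegral.integral_Iic_add_Ioi hqint.integrableOn hqint.integrableOn, hIic, hIoi,
      integral_Icc_eq_integral_Ioc]
    ring
  calc |∫ z, (K z * f (u₀ - h * z) + K z * f (u₀ + h * z) - K z * f u₀)|
      ≤ ∫ z, L' / 2 * h ^ 2 * (z ^ 2 * K z) := hbound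
    _ = L' / 2 * h ^ 2 * ∫ z : ℝ, z ^ 2 * K z := by rw [integral_const_mul]
    _ = L' * h ^ 2 * ∫ z in Set.Icc (0:ℝ) 1, z ^ 2 * K z := by
        rw [hsymm_split]; ring
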